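/- Let P : C^op → InfSL be a variational first order doctrine on a category C with distributive binary coproducts. Then for all objects A, B, the fibered equality on the coproduct decomposes as δ_{A+B} = ∃_{i_A×i_A}(δ_A) ∨ ∃_{i_B×i_B}(δ_B), where i_A, i_B are the coproduct injections. -/

import Mathlib

open CategoryTheory CategoryTheory.Limits Opposite

noncomputable section

universe w v u

namespace DoctrinePaper

variable {C : Type u} [Category.{v} C] [HasFiniteProducts C]

/-- The fiber of a primary doctrine `P : Cᵒᵖ ⥤ SemilatInfCat` over an object `A`. -/
abbrev Fib (P : Cᵒᵖ ⥤ SemilatInfCat.{w}) (A : C) : Type w :=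
  ↥(P.obj (op A))

/-- Reindexing along an arrow `f : A ⟶ B`. -/
def rmap (P : Cᵒᵖ ⥤ SemilatInfCat.{w}) {A B : C} (f : A ⟶ B) :
    Fib P B → Fib P A :=
  fun x => (P.map f.op) x

variable (P : Cᵒᵖ ⥤ SemilatInfCat.{w})

/-- An elementary doctrine: fibered equalities `δ A ∈ P (A ⨯ A)` such that
`E_e(α) = P⟨pr1,pr2⟩(α) ⊓ P⟨pr2,pr3⟩(δ A)` is left adjoint to reindexing along
`e = ⟨pr1,pr2,pr2⟩ : X ⨯ A ⟶ (X ⨯ A) ⨯ A`. -/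
structure IsElementary where
  δ : ∀ A : C, Fib P (A ⨯ A)
  adj :
    ∀ (X A : C) (α : Fib P (X ⨯ A)) (β : Fib P ((X ⨯ A) ⨯ A)),
      (rmap P (prod.fst : (X ⨯ A) ⨯ A ⟶ X ⨯ A) α ⊓
          rmap P (prod.lift (prod.fst ≫ prod.snd) prod.snd : (X ⨯ A) ⨯ A ⟶ A ⨯ A) (δ A) ≤ β)
        ↔ α ≤ rmap P (prod.lift (𝟙 (X ⨯ A)) prod.snd : X ⨯ A ⟶ (X ⨯ A) ⨯ A) β

/-- A `P`-equivalence relation over `A`. -/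
structure IsEqRel (hE : IsElementary P) {A : C} (ρ : Fib P (A ⨯ A)) : Prop where
  refl : hE.δ A ≤ ρ
  symm : ρ = rmap P (prod.lift prod.snd prod.fst : A ⨯ A ⟶ A ⨯ A) ρ
  trans :
    rmap P (prod.fst : (A ⨯ A) ⨯ A ⟶ A ⨯ A) ρ ⊓
        rmap P (prod.lift (prod.fst ≫ prod.snd) prod.snd : (A ⨯ A) ⨯ A ⟶ A ⨯ A) ρ ≤
      rmap P (prod.lift (prod.fst ≫ prod.fst) prod.snd : (A ⨯ A) ⨯ A ⟶ A ⨯ A) ρ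

/-- An elementary existential doctrine, together with the induced left adjoints
`∃_f` along all arrows, satisfying the adjunction law, Frobenius reciprocity, and
the Beck–Chevalley condition along pullbacks of projections. -/
structure IsExistential extends IsElementary P where
  E : ∀ {A B : C}, (A ⟶ B) → Fib P A → Fib P B
  adjE : ∀ {A B : C} (f : A ⟶ B) (α : Fib P A) (β : Fib P B),
    E f α ≤ β ↔ α ≤ rmap P f β
  frobenius : ∀ {A B : C} (f : A ⟶ B) (α : Fib P A) (β : Fib P B),
    E f (α ⊓ rmap P f β) = E f α ⊓ β
  beckChevalley : ∀ {B A A' : C} (f : A' ⟶ A) (β : Fib P (B ⨯ A)),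
    E (prod.snd : B ⨯ A' ⟶ A') (rmap P (prod.map (𝟙 B) f) β) =
      rmap P f (E (prod.snd : B ⨯ A ⟶ A) β)

/-- Descent data for a relation `ρ` over `A`. -/
def Des {A : C} (ρ : Fib P (A ⨯ A)) : Set (Fib P A) :=
  {α | rmap P (prod.fst : A ⨯ A ⟶ A) α ⊓ ρ ≤ rmap P (prod.snd : A ⨯ A ⟶ A) α}

/-- Comprehensive diagonals: `f = g` iff `⊤ = P⟨f,g⟩(δ)`. -/
def ComprehensiveDiagonals (hE : IsElementary P) : Prop :=
  ∀ {X A : C} (f g : X ⟶ A), f = g ↔ rmap P (prod.lift f g) (hE.δ A) = ⊤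

/-- (Weak) comprehension structure. -/
structure Comprehension where
  cObj : ∀ {A : C}, Fib P A → C
  cArr : ∀ {A : C} (α : Fib P A), cObj α ⟶ A
  cTop : ∀ {A : C} (α : Fib P A), rmap P (cArr α) α = ⊤
  cUniv : ∀ {A : C} (α : Fib P A) {Y : C} (f : Y ⟶ A),
    rmap P f α = ⊤ → ∃ k : Y ⟶ cObj α, k ≫ cArr α = f

/-- Full comprehension. -/
def Comprehension.Full (hC : Comprehension P) : Prop :=
  ∀ {A : C} (α β : Fib P A), α ≤ β ↔ rmap P (hC.cArr α) β = ⊤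

/-- Strong comprehension: comprehension arrows are monic. -/
def Comprehension.Strong (hC : Comprehension P) : Prop :=
  ∀ {A : C} (α : Fib P A), Mono (hC.cArr α)

/-- `P`-injective arrow. -/
def PInj (hE : IsElementary P) {X A : C} (f : X ⟶ A) : Prop :=
  rmap P (prod.map f f) (hE.δ A) = hE.δ X

/-- `P`-surjective arrow. -/
def PSurj (hEx : IsExistential P) {X A : C} (f : X ⟶ A) : Prop :=
  hEx.E f (⊤ : Fib P X) = ⊤

/-- The product relation `ρ ⊠ σ` on `(A ⨯ B) ⨯ (A ⨯ B)`. -/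
def boxprod {A B : C} (ρ : Fib P (A ⨯ A)) (σ : Fib P (B ⨯ B)) :
    Fib P ((A ⨯ B) ⨯ (A ⨯ B)) :=
  rmap P (prod.map prod.fst prod.fst) ρ ⊓ rmap P (prod.map prod.snd prod.snd) σ

/-- A topology on a primary doctrine: a natural family of extensive, idempotent
inf-top-preserving maps commuting with reindexing. -/
structure DocTopology where
  j : ∀ {A : C}, Fib P A → Fib P A
  map_inf : ∀ {A : C} (α β : Fib P A), j (α ⊓ β) = j α ⊓ j β
  map_top : ∀ {A : C}, j (⊤ : Fib P A) = ⊤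
  natural : ∀ {A B : C} (f : A ⟶ B) (β : Fib P B), rmap P f (j β) = j (rmap P f β)
  le_j : ∀ {A : C} (α : Fib P A), α ≤ j α
  idem : ∀ {A : C} (α : Fib P A), j (j α) = j α

/-- An implicational doctrine: each fiber has Heyting implication. -/
structure IsImplicational where
  imp : ∀ {A : C}, Fib P A → Fib P A → Fib P A
  adj : ∀ {A : C} (α β γ : Fib P A), γ ≤ imp α β ↔ γ ⊓ α ≤ β

/-- A universal doctrine: right adjoints to reindexing along projections,
satisfying the Beck–Chevalley condition. -/
structure IsUniversal where
  all : ∀ {B A : C}, Fib P (B ⨯ A) → Fib P A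
  adj : ∀ {B A : C} (γ : Fib P (B ⨯ A)) (β : Fib P A),
    rmap P (prod.snd : B ⨯ A ⟶ A) β ≤ γ ↔ β ≤ all γ
  beckChevalley : ∀ {B A A' : C} (f : A' ⟶ A) (γ : Fib P (B ⨯ A)),
    rmap P f (all γ) = all (rmap P (prod.map (𝟙 B) f) γ)

/-- A disjunctive doctrine: each fiber has finite distributive joins, preserved
by reindexing. -/
structure IsDisjunctive where
  bot : ∀ {A : C}, Fib P A
  sup : ∀ {A : C}, Fib P A → Fib P A → Fib P A
  bot_le : ∀ {A : C} (α : Fib P A), bot ≤ α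
  le_sup_left : ∀ {A : C} (α β : Fib P A), α ≤ sup α β
  le_sup_right : ∀ {A : C} (α β : Fib P A), β ≤ sup α β
  sup_le : ∀ {A : C} (α β γ : Fib P A), α ≤ γ → β ≤ γ → sup α β ≤ γ
  inf_sup_distrib : ∀ {A : C} (α β γ : Fib P A), α ⊓ sup β γ = sup (α ⊓ β) (α ⊓ γ)
  map_bot : ∀ {A B : C} (f : A ⟶ B), rmap P f bot = bot
  map_sup : ∀ {A B : C} (f : A ⟶ B) (β γ : Fib P B),
    rmap P f (sup β γ) = sup (rmap P f β) (rmap P f γ)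

section Aux

variable {P}

lemma rmap_comp' {A B D : C} (f : A ⟶ B) (g : B ⟶ D) (x : Fib P D) :
    rmap P (f ≫ g) x = rmap P f (rmap P g x) := by
  simp only [rmap]; rw [op_comp, P.map_comp]; rfl

lemma rmap_id' {A : C} (x : Fib P A) : rmap P (𝟙 A) x = x := by
  simp only [rmap]; rw [op_id, P.map_id]; rfl

lemma rmap_mono' {A B : C} (f : A ⟶ B) {x y : Fib P B} (h : x ≤ y) :
    rmap P f x ≤ rmap P f y :=
  OrderHomClass.mono (show InfTopHom _ _ from P.map f.op) h

lemma rmap_top' {A B : C} (f : A ⟶ B) : rmap P f (⊤ : Fib P B) = ⊤ :=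
  map_top (show InfTopHom _ _ from P.map f.op)

lemma rmap_inf' {A B : C} (f : A ⟶ B) (x y : Fib P B) :
    rmap P f (x ⊓ y) = rmap P f x ⊓ rmap P f y :=
  map_inf (show InfTopHom _ _ from P.map f.op) x y

/-- `δ A` is the least element among "reflexive" ones: if the restriction of `ρ`
along the diagonal is `⊤`, then `δ A ≤ ρ`. -/
lemma delta_le_of_diag_top (hE : IsElementary P) {A : C} (ρ : Fib P (A ⨯ A))
    (h : rmap P (prod.lift (𝟙 A) (𝟙 A)) ρ = ⊤) : hE.δ A ≤ ρ := by
  set p : (A ⨯ A) ⨯ A ⟶ A ⨯ A := prod.lift (prod.fst ≫ prod.fst) prod.snd with hp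
  have heq : (prod.lift (𝟙 (A ⨯ A)) prod.snd : A ⨯ A ⟶ (A ⨯ A) ⨯ A) ≫ p = 𝟙 _ := by
    rw [hp]; ext <;> simp only [Category.assoc, prod.lift_fst, prod.lift_snd, prod.lift_fst_assoc, prod.lift_snd_assoc, Category.comp_id, Category.id_comp]
  have h1 : ρ ≤ rmap P (prod.lift (𝟙 (A ⨯ A)) prod.snd) (rmap P p ρ) := by
    rw [← rmap_comp', heq, rmap_id']
  have h2 := (hE.adj A A ρ (rmap P p ρ)).mpr h1
  set m : A ⨯ A ⟶ (A ⨯ A) ⨯ A := prod.lift (prod.lift prod.fst prod.fst) prod.snd with hm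
  have h3 := rmap_mono' (P := P) m h2
  rw [rmap_inf', ← rmap_comp', ← rmap_comp', ← rmap_comp'] at h3
  have e1 : m ≫ (prod.fst : (A ⨯ A) ⨯ A ⟶ A ⨯ A) =
      prod.fst ≫ prod.lift (𝟙 A) (𝟙 A) := by rw [hm]; ext <;> simp only [Category.assoc, prod.lift_fst, prod.lift_snd, prod.lift_fst_assoc, prod.lift_snd_assoc, Category.comp_id, Category.id_comp]
  have e2 : m ≫ (prod.lift (prod.fst ≫ prod.snd) prod.snd : (A ⨯ A) ⨯ A ⟶ A ⨯ A) = 𝟙 _ := by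
    rw [hm]; ext <;> simp only [Category.assoc, prod.lift_fst, prod.lift_snd, prod.lift_fst_assoc, prod.lift_snd_assoc, Category.comp_id, Category.id_comp]
  have e3 : m ≫ p = 𝟙 _ := by rw [hm, hp]; ext <;> simp only [Category.assoc, prod.lift_fst, prod.lift_snd, prod.lift_fst_assoc, prod.lift_snd_assoc, Category.comp_id, Category.id_comp]
  rw [e1, e2, e3, rmap_id', rmap_id', rmap_comp', h, rmap_top'] at h3
  simpa using h3

end Aux

/-- In a variational first order doctrine over a base with
distributive binary coproducts, the fibered equality on a coproduct decomposes
as `δ_{A+B} = ∃_{i_A×i_A}(δ_A) ∨ ∃_{i_B×i_B}(δ_B)`. -/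
theorem coproduct_equality_decomposition
    [HasBinaryCoproducts C]
    (hdistrib : ∀ A B D : C,
      IsIso (coprod.desc (prod.map (𝟙 A) coprod.inl) (prod.map (𝟙 A) coprod.inr) :
        (A ⨯ B) ⨿ (A ⨯ D) ⟶ A ⨯ (B ⨿ D)))
    (hP : IsExistential P) (hI : IsImplicational P) (hD : IsDisjunctive P)
    (hU : IsUniversal P)
    (hC : Comprehension P) (hfull : hC.Full P)
    (hcd : ComprehensiveDiagonals P hP.toIsElementary)
    (A B : C) :
    hP.δ (A ⨿ B) =
      hD.sup
        (hP.E (prod.map (coprod.inl : A ⟶ A ⨿ B) (coprod.inl : A ⟶ A ⨿ B)) (hP.δ A))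
        (hP.E (prod.map (coprod.inr : B ⟶ A ⨿ B) (coprod.inr : B ⟶ A ⨿ B)) (hP.δ B)) := by
  -- units of the adjunctions `∃_{i×i} ⊣ P(i×i)`
  have unitA : hP.δ A ≤ rmap P (prod.map (coprod.inl : A ⟶ A ⨿ B) (coprod.inl : A ⟶ A ⨿ B))
      (hP.E (prod.map (coprod.inl : A ⟶ A ⨿ B) (coprod.inl : A ⟶ A ⨿ B)) (hP.δ A)) :=
    (hP.adjE _ _ _).mp le_rfl
  have unitB : hP.δ B ≤ rmap P (prod.map (coprod.inr : B ⟶ A ⨿ B) (coprod.inr : B ⟶ A ⨿ B))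
      (hP.E (prod.map (coprod.inr : B ⟶ A ⨿ B) (coprod.inr : B ⟶ A ⨿ B)) (hP.δ B)) :=
    (hP.adjE _ _ _).mp le_rfl
  -- comprehensive diagonals along identities
  have diagA : rmap P (prod.lift (𝟙 A) (𝟙 A)) (hP.δ A) = ⊤ := (hcd _ _).mp rfl
  have diagB : rmap P (prod.lift (𝟙 B) (𝟙 B)) (hP.δ B) = ⊤ := (hcd _ _).mp rfl
  set σ := hD.sup
      (hP.E (prod.map (coprod.inl : A ⟶ A ⨿ B) (coprod.inl : A ⟶ A ⨿ B)) (hP.δ A))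
      (hP.E (prod.map (coprod.inr : B ⟶ A ⨿ B) (coprod.inr : B ⟶ A ⨿ B)) (hP.δ B)) with hσ
  apply le_antisymm
  · -- coproduct injections are jointly P-surjective
    have jsurj : (⊤ : Fib P (A ⨿ B)) =
        hD.sup (hP.E (coprod.inl : A ⟶ A ⨿ B) ⊤) (hP.E (coprod.inr : B ⟶ A ⨿ B) ⊤) := by
      set α := hD.sup (hP.E (coprod.inl : A ⟶ A ⨿ B) ⊤) (hP.E (coprod.inr : B ⟶ A ⨿ B) ⊤)
        with hα
      have hA : rmap P (coprod.inl : A ⟶ A ⨿ B) α = ⊤ :=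
        le_antisymm le_top ((hP.adjE _ _ _).mp (hD.le_sup_left _ _))
      have hB : rmap P (coprod.inr : B ⟶ A ⨿ B) α = ⊤ :=
        le_antisymm le_top ((hP.adjE _ _ _).mp (hD.le_sup_right _ _))
      obtain ⟨kA, hkA⟩ := hC.cUniv α _ hA
      obtain ⟨kB, hkB⟩ := hC.cUniv α _ hB
      have hs : coprod.desc kA kB ≫ hC.cArr α = 𝟙 (A ⨿ B) := by
        ext <;> simp [hkA, hkB]
      calc (⊤ : Fib P (A ⨿ B))
          = rmap P (coprod.desc kA kB) (rmap P (hC.cArr α) α) := by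
            rw [hC.cTop, rmap_top']
        _ = α := by rw [← rmap_comp', hs, rmap_id']
    apply delta_le_of_diag_top hP.toIsElementary
    rw [eq_top_iff, jsurj]
    apply hD.sup_le
    · rw [hP.adjE]
      have e : (coprod.inl : A ⟶ A ⨿ B) ≫ prod.lift (𝟙 (A ⨿ B)) (𝟙 (A ⨿ B)) =
          prod.lift (𝟙 A) (𝟙 A) ≫ prod.map coprod.inl coprod.inl := by ext <;> simp
      rw [← rmap_comp', e, rmap_comp']
      calc (⊤ : Fib P A) = rmap P (prod.lift (𝟙 A) (𝟙 A)) (hP.δ A) := diagA.symm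
        _ ≤ _ := rmap_mono' _ (le_trans unitA (rmap_mono' _ (hD.le_sup_left _ _)))
    · rw [hP.adjE]
      have e : (coprod.inr : B ⟶ A ⨿ B) ≫ prod.lift (𝟙 (A ⨿ B)) (𝟙 (A ⨿ B)) =
          prod.lift (𝟙 B) (𝟙 B) ≫ prod.map coprod.inr coprod.inr := by ext <;> simp
      rw [← rmap_comp', e, rmap_comp']
      calc (⊤ : Fib P B) = rmap P (prod.lift (𝟙 B) (𝟙 B)) (hP.δ B) := diagB.symm
        _ ≤ _ := rmap_mono' _ (le_trans unitB (rmap_mono' _ (hD.le_sup_right _ _)))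
  · apply hD.sup_le
    · rw [hP.adjE]
      apply delta_le_of_diag_top hP.toIsElementary
      rw [← rmap_comp']
      have e : prod.lift (𝟙 A) (𝟙 A) ≫ prod.map (coprod.inl : A ⟶ A ⨿ B) (coprod.inl : A ⟶ A ⨿ B) =
          prod.lift coprod.inl coprod.inl := by ext <;> simp
      rw [e]
      exact (hcd coprod.inl coprod.inl).mp rfl
    · rw [hP.adjE]
      apply delta_le_of_diag_top hP.toIsElementary
      rw [← rmap_comp']
      have e : prod.lift (𝟙 B) (𝟙 B) ≫ prod.map (coprod.inr : B ⟶ A ⨿ B) (coprod.inr : B ⟶ A ⨿ B) =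
          prod.lift coprod.inr coprod.inr := by ext <;> simp
      rw [e]
      exact (hcd coprod.inr coprod.inr).mp rfl

end DoctrinePaper
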